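/- Let L be a finite-dimensional anti-commutative algebra over a field such that Aut(L) acts irreducibly on L. Then L is isomorphic to a direct sum I ⊕ ⋯ ⊕ I of ℓ copies of a simple anti-commutative algebra I whose automorphism group acts irreducibly on I. Moreover, if L is non-abelian, then ℓ equals the number of minimal ideals of L. -/
import Mathlib


variable {F L : Type*} [Field F] [AddCommGroup L] [Module F L]

/-- A linear automorphism of `L` preserving the product `mul`. -/
def IsMulAut (mul : L →ₗ[F] L →ₗ[F] L) (e : L ≃ₗ[F] L) : Prop :=
  ∀ x y : L, e (mul x y) = mul (e x) (e y)

/-- `Aut(L)` acts irreducibly on `L`. -/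
def IsIrredAlg (mul : L →ₗ[F] L →ₗ[F] L) : Prop :=
  ∀ W : Submodule F L,
    (∀ e : L ≃ₗ[F] L, IsMulAut mul e → W.map (e : L →ₗ[F] L) = W) → W = ⊥ ∨ W = ⊤

/-- An ideal of the anti-commutative algebra `(L, mul)`. -/
def IsAlgIdeal (mul : L →ₗ[F] L →ₗ[F] L) (W : Submodule F L) : Prop :=
  ∀ x ∈ W, ∀ y : L, mul x y ∈ W

/-- A minimal (non-zero) ideal. -/
def IsMinIdeal (mul : L →ₗ[F] L →ₗ[F] L) (I : Submodule F L) : Prop :=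
  IsAlgIdeal mul I ∧ I ≠ ⊥ ∧ ∀ J : Submodule F L, IsAlgIdeal mul J → J ≤ I → J = ⊥ ∨ J = I

section Aux

variable (mul : L →ₗ[F] L →ₗ[F] L)

lemma aux_anti (halt : ∀ x : L, mul x x = 0) (x y : L) : mul x y = - mul y x := by
  have h := halt (x + y)
  simp only [map_add, LinearMap.add_apply, halt, zero_add, add_zero] at h
  exact eq_neg_of_add_eq_zero_right h

lemma aux_id : IsMulAut mul (LinearEquiv.refl F L) := fun _ _ => rfl

lemma aux_symm {e : L ≃ₗ[F] L} (he : IsMulAut mul e) : IsMulAut mul e.symm := by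
  intro x y
  apply e.injective
  rw [he, e.apply_symm_apply, e.apply_symm_apply, e.apply_symm_apply]

lemma aux_trans {e f : L ≃ₗ[F] L} (he : IsMulAut mul e) (hf : IsMulAut mul f) :
    IsMulAut mul (e.trans f) := by
  intro x y
  simp only [LinearEquiv.trans_apply]
  rw [he, hf]

lemma aux_map_ideal {e : L ≃ₗ[F] L} (he : IsMulAut mul e) {I : Submodule F L}
    (hI : IsAlgIdeal mul I) : IsAlgIdeal mul (I.map (e : L →ₗ[F] L)) := by
  rintro x hx y
  obtain ⟨a, ha, rfl⟩ := hx
  refine ⟨mul a (e.symm y), hI a ha _, ?_⟩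
  simp only [LinearEquiv.coe_coe]
  rw [he, e.apply_symm_apply]

lemma aux_map_map (e : L ≃ₗ[F] L) (K : Submodule F L) :
    (K.map (e.symm : L →ₗ[F] L)).map (e : L →ₗ[F] L) = K := by
  ext x
  simp

lemma aux_map_min {e : L ≃ₗ[F] L} (he : IsMulAut mul e) {I : Submodule F L}
    (hI : IsMinIdeal mul I) : IsMinIdeal mul (I.map (e : L →ₗ[F] L)) := by
  obtain ⟨h1, h2, h3⟩ := hI
  refine ⟨aux_map_ideal mul he h1, ?_, ?_⟩
  · intro hbot
    apply h2
    apply Submodule.map_injective_of_injective e.injective (f := (e : L →ₗ[F] L))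
    rw [hbot, Submodule.map_bot]
  · intro J hJ hJle
    have hJ'le : J.map (e.symm : L →ₗ[F] L) ≤ I := by
      rintro x ⟨a, ha, rfl⟩
      obtain ⟨b, hb, hba⟩ := hJle ha
      rw [← hba]
      simpa using hb
    rcases h3 _ (aux_map_ideal mul (aux_symm mul he) hJ) hJ'le with h | h
    · left
      rw [← aux_map_map e J, h, Submodule.map_bot]
    · right
      rw [← aux_map_map e J, h]

end Aux

section Aux2
variable (mul : L →ₗ[F] L →ₗ[F] L)

lemma aux_inter_ideal {I J : Submodule F L} (hI : IsAlgIdeal mul I) (hJ : IsAlgIdeal mul J) :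
    IsAlgIdeal mul (I ⊓ J) := fun x hx y => ⟨hI x hx.1 y, hJ x hx.2 y⟩

lemma aux_min_inter {I J : Submodule F L} (hI : IsMinIdeal mul I) (hJ : IsMinIdeal mul J)
    (hne : I ≠ J) : I ⊓ J = ⊥ := by
  rcases hI.2.2 (I ⊓ J) (aux_inter_ideal mul hI.1 hJ.1) inf_le_left with h | h
  · exact h
  · exfalso
    have hIJ : I ≤ J := by rw [← h]; exact inf_le_right
    rcases hJ.2.2 I hI.1 hIJ with h' | h'
    · exact hI.2.1 h'
    · exact hne h'

lemma aux_min_mul_zero (halt : ∀ x : L, mul x x = 0) {I J : Submodule F L}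
    (hI : IsMinIdeal mul I) (hJ : IsMinIdeal mul J) (hne : I ≠ J) :
    ∀ x ∈ I, ∀ y ∈ J, mul x y = 0 := by
  intro x hx y hy
  have h1 : mul x y ∈ I := hI.1 x hx y
  have h2 : mul x y ∈ J := by
    rw [aux_anti mul halt x y]
    exact J.neg_mem (hJ.1 y hy x)
  have : mul x y ∈ I ⊓ J := ⟨h1, h2⟩
  rw [aux_min_inter mul hI hJ hne] at this
  simpa using this

lemma aux_exists_min [FiniteDimensional F L] :
    ∀ (n : ℕ) (I : Submodule F L), Module.finrank F I ≤ n → IsAlgIdeal mul I → I ≠ ⊥ →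
      ∃ M, M ≤ I ∧ IsMinIdeal mul M := by
  intro n
  induction n with
  | zero =>
    intro I h hid hne
    exfalso
    apply hne
    rw [← Submodule.finrank_eq_zero (R := F)]
    omega
  | succ n ih =>
    intro I hle hid hne
    by_cases hmin : ∀ J, IsAlgIdeal mul J → J ≤ I → J = ⊥ ∨ J = I
    · exact ⟨I, le_rfl, hid, hne, hmin⟩
    · push_neg at hmin
      obtain ⟨J, hJid, hJle, hJbot, hJne⟩ := hmin
      have hlt : Module.finrank F J < Module.finrank F I :=
        Submodule.finrank_lt_finrank_of_lt (lt_of_le_of_ne hJle hJne)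
      obtain ⟨M, hMle, hM⟩ := ih J (by omega) hJid hJbot
      exact ⟨M, hMle.trans hJle, hM⟩

lemma aux_ker_inv {e : L ≃ₗ[F] L} (he : IsMulAut mul e) :
    (LinearMap.ker mul).map (e : L →ₗ[F] L) = LinearMap.ker mul := by
  have key : ∀ f : L ≃ₗ[F] L, IsMulAut mul f →
      (LinearMap.ker mul).map (f : L →ₗ[F] L) ≤ LinearMap.ker mul := by
    rintro f hf x ⟨a, ha, rfl⟩
    rw [SetLike.mem_coe, LinearMap.mem_ker] at ha
    rw [LinearMap.mem_ker]
    ext y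
    simp only [LinearEquiv.coe_coe, LinearMap.zero_apply]
    calc mul (f a) y = mul (f a) (f (f.symm y)) := by rw [f.apply_symm_apply]
    _ = f (mul a (f.symm y)) := (hf a (f.symm y)).symm
    _ = 0 := by rw [ha]; simp
  refine le_antisymm (key e he) ?_
  conv_lhs => rw [← aux_map_map e (LinearMap.ker mul)]
  exact Submodule.map_mono (key e.symm (aux_symm mul he))

lemma aux_Z_bot (hirr : IsIrredAlg mul) (hnz : ∃ x y : L, mul x y ≠ 0) :
    LinearMap.ker mul = ⊥ := by
  rcases hirr (LinearMap.ker mul) (fun e he => aux_ker_inv mul he) with h | h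
  · exact h
  · exfalso
    obtain ⟨x, y, hxy⟩ := hnz
    apply hxy
    have : x ∈ LinearMap.ker mul := h ▸ Submodule.mem_top
    rw [LinearMap.mem_ker] at this
    rw [this]
    simp

lemma aux_orbit_top (hirr : IsIrredAlg mul) (I : Submodule F L) (hne : I ≠ ⊥) :
    (⨆ p : {e : L ≃ₗ[F] L // IsMulAut mul e}, I.map (p.1 : L →ₗ[F] L)) = ⊤ := by
  set T := ⨆ p : {e : L ≃ₗ[F] L // IsMulAut mul e}, I.map (p.1 : L →ₗ[F] L) with hTdef
  have key : ∀ f : L ≃ₗ[F] L, IsMulAut mul f → T.map (f : L →ₗ[F] L) ≤ T := by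
    intro f hf
    rw [hTdef, Submodule.map_iSup]
    apply iSup_le
    intro p
    rw [← Submodule.map_comp]
    have hcomp : (f : L →ₗ[F] L).comp (p.1 : L →ₗ[F] L) = ((p.1.trans f : L ≃ₗ[F] L) : L →ₗ[F] L) := by
      ext x; rfl
    rw [hcomp]
    exact le_iSup (fun p : {e : L ≃ₗ[F] L // IsMulAut mul e} => I.map (p.1 : L →ₗ[F] L))
      ⟨p.1.trans f, aux_trans mul p.2 hf⟩
  have hT : ∀ e : L ≃ₗ[F] L, IsMulAut mul e → T.map (e : L →ₗ[F] L) = T := by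
    intro e he
    refine le_antisymm (key e he) ?_
    conv_lhs => rw [← aux_map_map e T]
    exact Submodule.map_mono (key e.symm (aux_symm mul he))
  rcases hirr T hT with h | h
  · exfalso
    apply hne
    rw [← le_bot_iff, ← h, hTdef]
    have : I.map ((LinearEquiv.refl F L : L ≃ₗ[F] L) : L →ₗ[F] L) ≤ T :=
      le_iSup (fun p : {e : L ≃ₗ[F] L // IsMulAut mul e} => I.map (p.1 : L →ₗ[F] L))
        ⟨LinearEquiv.refl F L, aux_id mul⟩
    simpa using this
  · exact h

end Aux2

section Aux3
variable (mul : L →ₗ[F] L →ₗ[F] L)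

/-- The assembly map `(Fin k → I) → L`, `f ↦ ∑ j, σ j (f j)`. -/
def Phi (I : Submodule F L) {k : ℕ} (σ : Fin k → (L ≃ₗ[F] L)) : (Fin k → I) →ₗ[F] L :=
  ∑ j, (((σ j : L →ₗ[F] L)).comp I.subtype).comp (LinearMap.proj j)

lemma aux_Phi_apply (I : Submodule F L) {k : ℕ} (σ : Fin k → (L ≃ₗ[F] L)) (f : Fin k → I) :
    Phi I σ f = ∑ j, σ j (f j : L) := by
  simp [Phi, LinearMap.sum_apply]

lemma aux_Phi_snoc (I : Submodule F L) {k : ℕ} (σ : Fin k → (L ≃ₗ[F] L)) (τ : L ≃ₗ[F] L)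
    (f : Fin (k + 1) → I) :
    Phi I (Fin.snoc σ τ) f = Phi I σ (Fin.init f) + τ (f (Fin.last k) : L) := by
  rw [aux_Phi_apply, aux_Phi_apply, Fin.sum_univ_castSucc]
  congr 1
  · apply Finset.sum_congr rfl
    intro j _
    rw [Fin.snoc_castSucc]
    rfl
  · rw [Fin.snoc_last]

lemma aux_range_ideal {I : Submodule F L} (hidl : IsAlgIdeal mul I) {k : ℕ}
    (σ : Fin k → {e : L ≃ₗ[F] L // IsMulAut mul e}) :
    IsAlgIdeal mul (LinearMap.range (Phi I (fun j => (σ j).1))) := by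
  rintro x ⟨f, rfl⟩ y
  refine ⟨fun j => ⟨mul (f j : L) ((σ j).1.symm y), hidl _ (f j).2 _⟩, ?_⟩
  rw [aux_Phi_apply, aux_Phi_apply]
  rw [map_sum, LinearMap.sum_apply]
  apply Finset.sum_congr rfl
  intro j _
  rw [(σ j).2, (σ j).1.apply_symm_apply]

end Aux3

section Aux4
variable (mul : L →ₗ[F] L →ₗ[F] L)

lemma aux_extend [FiniteDimensional F L] (hirr : IsIrredAlg mul)
    {I₀ : Submodule F L} (hmin : IsMinIdeal mul I₀) :
    ∀ (n k : ℕ) (σ : Fin k → {e : L ≃ₗ[F] L // IsMulAut mul e}),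
      Function.Injective (Phi I₀ (fun j => (σ j).1)) →
      Module.finrank F L ≤
        Module.finrank F (LinearMap.range (Phi I₀ (fun j => (σ j).1))) + n →
      ∃ (k' : ℕ) (σ' : Fin k' → {e : L ≃ₗ[F] L // IsMulAut mul e}),
        Function.Bijective (Phi I₀ (fun j => (σ' j).1)) := by
  intro n
  induction n with
  | zero =>
    intro k σ hinj hrk
    refine ⟨k, σ, hinj, ?_⟩
    rw [← LinearMap.range_eq_top (f := Phi I₀ (fun j => (σ j).1))]
    apply Submodule.eq_top_of_finrank_eq
    have := Submodule.finrank_le (LinearMap.range (Phi I₀ (fun j => (σ j).1)))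
    omega
  | succ n ih =>
    intro k σ hinj hrk
    by_cases htop : LinearMap.range (Phi I₀ (fun j => (σ j).1)) = ⊤
    · exact ⟨k, σ, hinj, LinearMap.range_eq_top.mp htop⟩
    set S := LinearMap.range (Phi I₀ (fun j => (σ j).1)) with hS
    have hnotle : ¬ (⨆ p : {e : L ≃ₗ[F] L // IsMulAut mul e}, I₀.map (p.1 : L →ₗ[F] L)) ≤ S := by
      rw [aux_orbit_top mul hirr I₀ hmin.2.1]
      intro hle
      exact htop (top_le_iff.mp hle)
    obtain ⟨p, hp⟩ := not_forall.mp (fun h => hnotle (iSup_le h))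
    set K := I₀.map (p.1 : L →ₗ[F] L) with hK
    have hKmin : IsMinIdeal mul K := aux_map_min mul p.2 hmin
    have hKS : K ⊓ S = ⊥ := by
      rcases hKmin.2.2 (K ⊓ S)
          (aux_inter_ideal mul hKmin.1 (aux_range_ideal mul hmin.1 σ)) inf_le_left with h | h
      · exact h
      · exact absurd (by rw [← h]; exact inf_le_right) hp
    set σ' : Fin (k + 1) → {e : L ≃ₗ[F] L // IsMulAut mul e} := Fin.snoc σ p with hσ'
    have hfun : (fun j => (σ' j).1) = Fin.snoc (fun j => (σ j).1) p.1 := by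
      funext j
      refine Fin.lastCases ?_ (fun i => ?_) j
      · rw [hσ']; simp
      · rw [hσ']; simp
    have hinj' : Function.Injective (Phi I₀ (fun j => (σ' j).1)) := by
      rw [hfun, ← LinearMap.ker_eq_bot]
      rw [Submodule.eq_bot_iff]
      intro f hf
      rw [LinearMap.mem_ker, aux_Phi_snoc] at hf
      have hlastmem : (p.1 ((f (Fin.last k)) : L)) ∈ K ⊓ S := by
        constructor
        · exact ⟨_, (f (Fin.last k)).2, rfl⟩
        · have heq : p.1 ((f (Fin.last k)) : L)
              = - Phi I₀ (fun j => (σ j).1) (Fin.init f) :=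
            eq_neg_of_add_eq_zero_right hf
          rw [hS, heq]
          exact Submodule.neg_mem _ ⟨_, rfl⟩
      rw [hKS] at hlastmem
      have hlast0 : f (Fin.last k) = 0 := by
        have h1 := (Submodule.mem_bot F).mp hlastmem
        have h2 : ((f (Fin.last k)) : L) = 0 := by
          apply p.1.injective
          simpa using h1
        exact Subtype.ext h2
      have hinit : Fin.init f = 0 := by
        apply hinj
        rw [map_zero]
        rw [hlast0] at hf
        simpa using hf
      funext j
      refine Fin.lastCases ?_ (fun i => ?_) j
      · exact hlast0
      · exact congrFun hinit i
    have hle' : S ≤ LinearMap.range (Phi I₀ (fun j => (σ' j).1)) := by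
      rintro x ⟨g, rfl⟩
      refine ⟨Fin.snoc g 0, ?_⟩
      rw [hfun, aux_Phi_snoc]
      simp [Fin.init_snoc]
    have hlt : S < LinearMap.range (Phi I₀ (fun j => (σ' j).1)) := by
      refine lt_of_le_of_ne hle' ?_
      intro heq
      apply hp
      rintro x ⟨a, ha, rfl⟩
      rw [heq]
      refine ⟨Fin.snoc 0 ⟨a, ha⟩, ?_⟩
      rw [hfun, aux_Phi_snoc]
      simp [Fin.init_snoc]
    have hrk' : Module.finrank F L ≤
        Module.finrank F (LinearMap.range (Phi I₀ (fun j => (σ' j).1))) + n := by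
      have := Submodule.finrank_lt_finrank_of_lt hlt
      omega
    exact ih (k + 1) σ' hinj' hrk'

end Aux4

section Aux5
variable (mul : L →ₗ[F] L →ₗ[F] L)

lemma aux_Phi_single (I : Submodule F L) {k : ℕ} (σ : Fin k → (L ≃ₗ[F] L)) (i : Fin k)
    (a : I) : Phi I σ (Pi.single i a) = σ i (a : L) := by
  rw [aux_Phi_apply]
  rw [Finset.sum_eq_single_of_mem i (Finset.mem_univ i)]
  · rw [Pi.single_eq_same]
  · intro j _ hj
    rw [Pi.single_eq_of_ne hj]
    simp

lemma aux_range_Phi (I : Submodule F L) {k : ℕ} (σ : Fin k → (L ≃ₗ[F] L)) :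
    LinearMap.range (Phi I σ) = ⨆ j, I.map (σ j : L →ₗ[F] L) := by
  apply le_antisymm
  · rintro x ⟨f, rfl⟩
    rw [aux_Phi_apply]
    apply Submodule.sum_mem
    intro j _
    apply Submodule.mem_iSup_of_mem j
    exact ⟨f j, (f j).2, rfl⟩
  · apply iSup_le
    rintro j x ⟨a, ha, rfl⟩
    exact ⟨Pi.single j ⟨a, ha⟩, aux_Phi_single I σ j ⟨a, ha⟩⟩

end Aux5

section Aux6
variable (mul : L →ₗ[F] L →ₗ[F] L)

lemma aux_J_distinct {I₀ : Submodule F L} (hne : I₀ ≠ ⊥) {ℓ : ℕ}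
    (σ : Fin ℓ → {e : L ≃ₗ[F] L // IsMulAut mul e})
    (hinj : Function.Injective (Phi I₀ (fun j => (σ j).1)))
    {i j : Fin ℓ} (hij : i ≠ j) :
    I₀.map ((σ i).1 : L →ₗ[F] L) ≠ I₀.map ((σ j).1 : L →ₗ[F] L) := by
  intro heq
  obtain ⟨a, haI, ha0⟩ := Submodule.exists_mem_ne_zero_of_ne_bot hne
  have : (σ i).1 a ∈ I₀.map ((σ j).1 : L →ₗ[F] L) := heq ▸ ⟨a, haI, rfl⟩
  obtain ⟨b, hbI, hb⟩ := this
  have h0 : Phi I₀ (fun j => (σ j).1) (Pi.single i ⟨a, haI⟩ - Pi.single j ⟨b, hbI⟩) = 0 := by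
    rw [map_sub, aux_Phi_single, aux_Phi_single]
    simp only [LinearEquiv.coe_coe] at hb
    show (σ i).1 a - (σ j).1 b = 0
    rw [← hb, sub_self]
  have h1 := hinj (by rw [h0, map_zero] : Phi I₀ (fun j => (σ j).1) _ = Phi I₀ (fun j => (σ j).1) 0)
  rw [sub_eq_zero] at h1
  have h2 := congrFun h1 i
  rw [Pi.single_eq_same, Pi.single_eq_of_ne hij] at h2
  exact ha0 (congrArg Subtype.val h2)

lemma aux_min_eq_J (halt : ∀ x : L, mul x x = 0) (hZ : LinearMap.ker mul = ⊥)
    {I₀ : Submodule F L} (hmin : IsMinIdeal mul I₀) {ℓ : ℕ}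
    (σ : Fin ℓ → {e : L ≃ₗ[F] L // IsMulAut mul e})
    (hsurj : Function.Surjective (Phi I₀ (fun j => (σ j).1)))
    {K : Submodule F L} (hK : IsMinIdeal mul K) :
    ∃ i, K = I₀.map ((σ i).1 : L →ₗ[F] L) := by
  by_contra h
  push_neg at h
  obtain ⟨x, hxK, hx0⟩ := Submodule.exists_mem_ne_zero_of_ne_bot hK.2.1
  have hker : x ∈ LinearMap.ker mul := by
    rw [LinearMap.mem_ker]
    ext y
    obtain ⟨f, rfl⟩ := hsurj y
    rw [aux_Phi_apply, map_sum, LinearMap.zero_apply]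
    apply Finset.sum_eq_zero
    intro j _
    exact aux_min_mul_zero mul halt hK (aux_map_min mul (σ j).2 hmin) (h j) x hxK _
      ⟨f j, (f j).2, rfl⟩
  rw [hZ] at hker
  exact hx0 ((Submodule.mem_bot F).mp hker)

lemma aux_mul_Phi (halt : ∀ x : L, mul x x = 0) {I₀ : Submodule F L}
    (hmin : IsMinIdeal mul I₀) {ℓ : ℕ}
    (σ : Fin ℓ → {e : L ≃ₗ[F] L // IsMulAut mul e})
    (hinj : Function.Injective (Phi I₀ (fun j => (σ j).1)))
    (f g : Fin ℓ → I₀) :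
    mul (Phi I₀ (fun j => (σ j).1) f) (Phi I₀ (fun j => (σ j).1) g)
      = Phi I₀ (fun j => (σ j).1) (fun i => ⟨mul (f i) (g i), hmin.1 _ (f i).2 _⟩) := by
  rw [aux_Phi_apply, aux_Phi_apply, aux_Phi_apply, map_sum]
  apply Finset.sum_congr rfl
  intro i _
  rw [map_sum, LinearMap.sum_apply, Finset.sum_eq_single_of_mem i (Finset.mem_univ i)]
  · exact ((σ i).2 _ _).symm
  · intro j _ hj
    exact aux_min_mul_zero mul halt (aux_map_min mul (σ j).2 hmin)
      (aux_map_min mul (σ i).2 hmin)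
      (aux_J_distinct mul hmin.2.1 σ hinj hj)
      _ ⟨f j, (f j).2, rfl⟩ _ ⟨g i, (g i).2, rfl⟩

lemma aux_simple (halt : ∀ x : L, mul x x = 0) {I₀ : Submodule F L}
    (hmin : IsMinIdeal mul I₀) {ℓ : ℕ}
    (σ : Fin ℓ → {e : L ≃ₗ[F] L // IsMulAut mul e})
    (hsurj : Function.Surjective (Phi I₀ (fun j => (σ j).1)))
    (J : Submodule F L) (hle : J ≤ I₀) (hJ : ∀ x ∈ J, ∀ y ∈ I₀, mul x y ∈ J) :
    J = ⊥ ∨ J = I₀ := by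
  apply hmin.2.2 J _ hle
  intro x hx y
  obtain ⟨f, rfl⟩ := hsurj y
  rw [aux_Phi_apply, map_sum]
  apply Submodule.sum_mem
  intro j _
  have hmem : ((σ j).1 ((f j) : L)) ∈ I₀.map ((σ j).1 : L →ₗ[F] L) := ⟨f j, (f j).2, rfl⟩
  by_cases hJj : I₀.map ((σ j).1 : L →ₗ[F] L) = I₀
  · apply hJ x hx
    rw [hJj] at hmem
    exact hmem
  · rw [aux_min_mul_zero mul halt hmin (aux_map_min mul (σ j).2 hmin) (Ne.symm hJj)
      x (hle hx) _ hmem]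
    exact J.zero_mem

end Aux6

section Aux7
variable (mul : L →ₗ[F] L →ₗ[F] L)

lemma aux_map_map' (e : L ≃ₗ[F] L) (K : Submodule F L) :
    (K.map (e : L →ₗ[F] L)).map (e.symm : L →ₗ[F] L) = K := by
  ext x; simp

lemma aux_map_trans (e f : L ≃ₗ[F] L) (K : Submodule F L) :
    K.map ((e.trans f : L ≃ₗ[F] L) : L →ₗ[F] L)
      = (K.map (e : L →ₗ[F] L)).map (f : L →ₗ[F] L) := by
  rw [← Submodule.map_comp]
  congr 1


end Aux7

section Aux8
variable (mul : L →ₗ[F] L →ₗ[F] L)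

/-- An automorphism of `L` fixing `I₀` maps `Ŵ = W.map I₀.subtype` into itself,
provided `W` is invariant under all algebra automorphisms of `I₀`. -/
lemma aux_stab_le {I₀ : Submodule F L}
    (hcl : ∀ x ∈ I₀, ∀ y ∈ I₀, mul x y ∈ I₀) (W : Submodule F I₀)
    (hW : ∀ e : I₀ ≃ₗ[F] I₀,
      (∀ x y : I₀, ((e ⟨mul x y, hcl _ x.2 _ y.2⟩ : I₀) : L) = mul (e x) (e y)) →
      W.map (e : I₀ →ₗ[F] I₀) = W)
    {p : L ≃ₗ[F] L} (hp : IsMulAut mul p) (hfix : I₀.map (p : L →ₗ[F] L) = I₀) :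
    (W.map I₀.subtype).map (p : L →ₗ[F] L) ≤ W.map I₀.subtype := by
  set e' : I₀ ≃ₗ[F] I₀ := (p.submoduleMap I₀).trans (LinearEquiv.ofEq _ _ hfix) with he'
  have hcoe : ∀ z : I₀, ((e' z : I₀) : L) = p (z : L) := by
    intro z
    rw [he']
    simp only [LinearEquiv.trans_apply, LinearEquiv.coe_ofEq_apply,
      LinearEquiv.submoduleMap_apply]
  have hWe : W.map (e' : I₀ →ₗ[F] I₀) = W := by
    apply hW
    intro x y
    rw [hcoe, hcoe, hcoe]
    exact hp x y
  rintro z ⟨w, hw, rfl⟩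
  obtain ⟨u, hu, rfl⟩ := hw
  have : e' u ∈ W := by
    rw [← hWe]
    exact ⟨u, hu, rfl⟩
  refine ⟨e' u, this, ?_⟩
  rw [Submodule.coe_subtype, hcoe]
  rfl

lemma aux_stab_eq {I₀ : Submodule F L}
    (hcl : ∀ x ∈ I₀, ∀ y ∈ I₀, mul x y ∈ I₀) (W : Submodule F I₀)
    (hW : ∀ e : I₀ ≃ₗ[F] I₀,
      (∀ x y : I₀, ((e ⟨mul x y, hcl _ x.2 _ y.2⟩ : I₀) : L) = mul (e x) (e y)) →
      W.map (e : I₀ →ₗ[F] I₀) = W)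
    {p : L ≃ₗ[F] L} (hp : IsMulAut mul p) (hfix : I₀.map (p : L →ₗ[F] L) = I₀) :
    (W.map I₀.subtype).map (p : L →ₗ[F] L) = W.map I₀.subtype := by
  refine le_antisymm (aux_stab_le mul hcl W hW hp hfix) ?_
  have hfix' : I₀.map (p.symm : L →ₗ[F] L) = I₀ := by
    conv_lhs => rw [← hfix, aux_map_map']
  conv_lhs => rw [← aux_map_map p (W.map I₀.subtype)]
  exact Submodule.map_mono (aux_stab_le mul hcl W hW (aux_symm mul hp) hfix')

end Aux8

section Aux9
variable (mul : L →ₗ[F] L →ₗ[F] L)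

lemma aux_irred (halt : ∀ x : L, mul x x = 0) (hirr : IsIrredAlg mul)
    (hZ : LinearMap.ker mul = ⊥) {I₀ : Submodule F L} (hmin : IsMinIdeal mul I₀)
    {ℓ : ℕ} (σ : Fin ℓ → {e : L ≃ₗ[F] L // IsMulAut mul e})
    (hbij : Function.Bijective (Phi I₀ (fun j => (σ j).1)))
    (hcl : ∀ x ∈ I₀, ∀ y ∈ I₀, mul x y ∈ I₀) (W : Submodule F I₀)
    (hW : ∀ e : I₀ ≃ₗ[F] I₀,
      (∀ x y : I₀, ((e ⟨mul x y, hcl _ x.2 _ y.2⟩ : I₀) : L) = mul (e x) (e y)) →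
      W.map (e : I₀ →ₗ[F] I₀) = W) :
    W = ⊥ ∨ W = ⊤ := by
  by_cases hWbot : W = ⊥
  · exact Or.inl hWbot
  right
  set Wh := W.map I₀.subtype with hWh
  have hWhle : Wh ≤ I₀ := Submodule.map_subtype_le I₀ W
  have hWhne : Wh ≠ ⊥ := by
    intro h
    apply hWbot
    rw [Submodule.eq_bot_iff] at h ⊢
    intro u hu
    have := h (u : L) ⟨u, hu, rfl⟩
    exact Subtype.ext this
  -- Step B : for any automorphism p, map p Wh = map (σ i) Wh for some i
  have stepB : ∀ p : {e : L ≃ₗ[F] L // IsMulAut mul e},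
      ∃ i, Wh.map (p.1 : L →ₗ[F] L) = Wh.map ((σ i).1 : L →ₗ[F] L) := by
    intro p
    obtain ⟨i, hi⟩ := aux_min_eq_J mul halt hZ hmin σ hbij.2 (aux_map_min mul p.2 hmin)
    refine ⟨i, ?_⟩
    set ρ : L ≃ₗ[F] L := p.1.trans (σ i).1.symm with hρ
    have hρaut : IsMulAut mul ρ := aux_trans mul p.2 (aux_symm mul (σ i).2)
    have hρfix : I₀.map (ρ : L →ₗ[F] L) = I₀ := by
      rw [hρ, aux_map_trans, hi, aux_map_map']
    have hρW : Wh.map (ρ : L →ₗ[F] L) = Wh := aux_stab_eq mul hcl W hW hρaut hρfix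
    have : (Wh.map (ρ : L →ₗ[F] L)).map ((σ i).1 : L →ₗ[F] L)
        = Wh.map ((σ i).1 : L →ₗ[F] L) := by rw [hρW]
    rw [← this, hρ, aux_map_trans, aux_map_map]
  -- Step C/D : the sum of the σ i images of Wh is everything
  have stepD : LinearMap.range (Phi Wh (fun j => (σ j).1)) = ⊤ := by
    rw [aux_range_Phi, eq_top_iff]
    conv_lhs => rw [← aux_orbit_top mul hirr Wh hWhne]
    apply iSup_le
    intro p
    obtain ⟨i, hi⟩ := stepB p
    rw [hi]
    exact le_iSup (fun j => Wh.map ((σ j).1 : L →ₗ[F] L)) i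
  -- Step E : I₀ is one of the J i
  obtain ⟨i₀, hi₀⟩ := aux_min_eq_J mul halt hZ hmin σ hbij.2 hmin
  -- Step F : conclude
  rw [Submodule.eq_top_iff']
  intro u
  have hx : ((u : L)) ∈ LinearMap.range (Phi Wh (fun j => (σ j).1)) := by
    rw [stepD]; trivial
  obtain ⟨g, hg⟩ := hx
  have hmem : (σ i₀).1.symm (u : L) ∈ I₀ := by
    have : (u : L) ∈ I₀.map ((σ i₀).1 : L →ₗ[F] L) := hi₀ ▸ u.2
    obtain ⟨a, ha, haeq⟩ := this
    have : (σ i₀).1.symm ((u : L)) = a := by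
      apply (σ i₀).1.injective
      rw [(σ i₀).1.apply_symm_apply, ← haeq]
      rfl
    rw [this]
    exact ha
  set f : Fin ℓ → I₀ := fun j => ⟨(g j : L), hWhle (g j).2⟩ with hf
  have h1 : Phi I₀ (fun j => (σ j).1) f = (u : L) := by
    rw [aux_Phi_apply, ← hg, aux_Phi_apply]
  have h2 : Phi I₀ (fun j => (σ j).1) (Pi.single i₀ ⟨(σ i₀).1.symm (u : L), hmem⟩)
      = (u : L) := by
    rw [aux_Phi_single]
    exact (σ i₀).1.apply_symm_apply _
  have hfe := hbij.1 (h1.trans h2.symm)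
  have hval := congrArg Subtype.val (congrFun hfe i₀)
  rw [Pi.single_eq_same] at hval
  -- hval : (g i₀ : L) = (σ i₀).symm u
  have hxW : (u : L) ∈ Wh.map ((σ i₀).1 : L →ₗ[F] L) := by
    refine ⟨(g i₀ : L), (g i₀).2, ?_⟩
    show (σ i₀).1 ((g i₀ : L)) = (u : L)
    rw [hval]
    exact (σ i₀).1.apply_symm_apply _
  have hfixi₀ : I₀.map ((σ i₀).1 : L →ₗ[F] L) = I₀ := hi₀.symm
  rw [aux_stab_eq mul hcl W hW (σ i₀).2 hfixi₀] at hxW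
  obtain ⟨w, hw, hweq⟩ := hxW
  have : u = w := Subtype.ext hweq.symm
  rw [this]
  exact hw

end Aux9

/-- A finite-dimensional anti-commutative algebra `L` on which `Aut(L)`
acts irreducibly is isomorphic to a direct sum of `ℓ` copies of a simple
anti-commutative algebra `I` whose automorphism group acts irreducibly on `I`;
moreover, if `L` is non-abelian, `ℓ` is the number of minimal ideals of `L`. -/
theorem stmt9 (mul : L →ₗ[F] L →ₗ[F] L) [FiniteDimensional F L]
    (halt : ∀ x : L, mul x x = 0) (hirr : IsIrredAlg mul) :
    ∃ ℓ : ℕ, 0 < ℓ ∧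
      ∃ (I : Submodule F L) (hcl : ∀ x ∈ I, ∀ y ∈ I, mul x y ∈ I),
        -- `I` (with the restricted product) is a simple algebra
        (∀ J : Submodule F L, J ≤ I → (∀ x ∈ J, ∀ y ∈ I, mul x y ∈ J) →
          J = ⊥ ∨ J = I) ∧
        -- the automorphism group of `I` acts irreducibly on `I`
        (∀ W : Submodule F I,
          (∀ e : I ≃ₗ[F] I,
            (∀ x y : I,
              ((e ⟨mul x y, hcl _ x.2 _ y.2⟩ : I) : L) = mul (e x) (e y)) →
            W.map (e : I →ₗ[F] I) = W) → W = ⊥ ∨ W = ⊤) ∧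
        -- `L ≅ I^{⊕ℓ}` as algebras (componentwise product on the left)
        (∃ e : (Fin ℓ → I) ≃ₗ[F] L, ∀ f g : Fin ℓ → I,
          mul (e f) (e g) =
            e (fun i => ⟨mul (f i) (g i), hcl _ (f i).2 _ (g i).2⟩)) ∧
        -- if `L` is non-abelian then `ℓ` is the number of minimal ideals of `L`
        ((∃ x y : L, mul x y ≠ 0) →
          Nat.card {W : Submodule F L // IsMinIdeal mul W} = ℓ) := by
  by_cases hnz : ∃ x y : L, mul x y ≠ 0
  · -- non-abelian case
    have hZ := aux_Z_bot mul hirr hnz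
    have hLne : (⊤ : Submodule F L) ≠ ⊥ := by
      intro h
      obtain ⟨x, y, hxy⟩ := hnz
      apply hxy
      have hx : x = 0 := (Submodule.mem_bot F).mp (h ▸ Submodule.mem_top)
      rw [hx]
      simp
    obtain ⟨I₀, -, hmin⟩ := aux_exists_min mul (Module.finrank F (⊤ : Submodule F L))
      ⊤ le_rfl (fun x _ y => Submodule.mem_top) hLne
    have hinj0 : Function.Injective
        (Phi I₀ (fun j : Fin 0 => ((Fin.elim0 j : {e : L ≃ₗ[F] L // IsMulAut mul e}).1))) := by
      intro a b _
      funext j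
      exact j.elim0
    obtain ⟨ℓ, σ, hbij⟩ := aux_extend mul hirr hmin (Module.finrank F L) 0 Fin.elim0 hinj0
      (Nat.le_add_left _ _)
    have hcl : ∀ x ∈ I₀, ∀ y ∈ I₀, mul x y ∈ I₀ := fun x hx y _ => hmin.1 x hx y
    refine ⟨ℓ, ?_, I₀, hcl, aux_simple mul halt hmin σ hbij.2,
      aux_irred mul halt hirr hZ hmin σ hbij hcl, ?_, ?_⟩
    · rcases Nat.eq_zero_or_pos ℓ with h0 | hpos
      · exfalso
        subst h0
        obtain ⟨x, y, hxy⟩ := hnz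
        apply hxy
        obtain ⟨f, hf⟩ := hbij.2 x
        have hx : x = 0 := by
          rw [← hf]
          have hf0 : f = 0 := funext fun j => j.elim0
          rw [hf0, map_zero]
        rw [hx]
        simp
      · exact hpos
    · refine ⟨LinearEquiv.ofBijective _ hbij, ?_⟩
      intro f g
      simp only [LinearEquiv.ofBijective_apply]
      exact aux_mul_Phi mul halt hmin σ hbij.1 f g
    · intro _
      have hbij' : Function.Bijective
          (fun i : Fin ℓ => (⟨I₀.map ((σ i).1 : L →ₗ[F] L),
            aux_map_min mul (σ i).2 hmin⟩ : {W : Submodule F L // IsMinIdeal mul W})) := by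
        constructor
        · intro i j hij
          by_contra hne
          exact aux_J_distinct mul hmin.2.1 σ hbij.1 hne (congrArg Subtype.val hij)
        · rintro ⟨K, hK⟩
          obtain ⟨i, hi⟩ := aux_min_eq_J mul halt hZ hmin σ hbij.2 hK
          exact ⟨i, Subtype.ext hi.symm⟩
      rw [← Nat.card_eq_of_bijective _ hbij', Nat.card_eq_fintype_card, Fintype.card_fin]
  · -- abelian case
    push_neg at hnz
    rcases subsingleton_or_nontrivial L with hL | hL
    · -- trivial algebra
      refine ⟨1, one_pos, ⊥, (fun x _ y _ => by rw [hnz]; exact Submodule.zero_mem _),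
        ?_, ?_, ?_, ?_⟩
      · intro J hJ _
        left
        exact le_bot_iff.mp hJ
      · intro W _
        left
        have : Subsingleton (Submodule F (⊥ : Submodule F L)) :=
          (Submodule.subsingleton_iff F).mpr inferInstance
        exact Subsingleton.elim W ⊥
      · refine ⟨LinearEquiv.ofLinear (0 : (Fin 1 → (⊥ : Submodule F L)) →ₗ[F] L) 0
          (LinearMap.ext fun x => Subsingleton.elim _ _)
          (LinearMap.ext fun x => Subsingleton.elim _ _), ?_⟩
        intro f g
        exact Subsingleton.elim _ _
      · rintro ⟨x, y, hxy⟩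
        exact absurd (hnz x y) hxy
    · -- nonzero abelian algebra
      obtain ⟨v, hv⟩ := exists_ne (0 : L)
      have hdim : Module.finrank F ↥(Submodule.span F {v}) = 1 := finrank_span_singleton hv
      refine ⟨Module.finrank F L, Module.finrank_pos, Submodule.span F {v},
        (fun x _ y _ => by rw [hnz]; exact Submodule.zero_mem _), ?_, ?_, ?_, ?_⟩
      · intro J hle _
        by_cases hJ : J = ⊥
        · exact Or.inl hJ
        right
        refine le_antisymm hle ?_
        obtain ⟨x, hxJ, hx0⟩ := Submodule.exists_mem_ne_zero_of_ne_bot hJ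
        obtain ⟨c, hc⟩ := Submodule.mem_span_singleton.mp (hle hxJ)
        have hc0 : c ≠ 0 := by
          intro h
          apply hx0
          rw [← hc, h, zero_smul]
        rw [Submodule.span_le, Set.singleton_subset_iff]
        have : v = c⁻¹ • x := by
          rw [← hc, smul_smul, inv_mul_cancel₀ hc0, one_smul]
        rw [this]
        exact J.smul_mem _ hxJ
      · intro W _
        by_cases hW : W = ⊥
        · exact Or.inl hW
        right
        apply Submodule.eq_top_of_finrank_eq
        have h1 := Submodule.finrank_le W
        have h2 : Module.finrank F W ≠ 0 := fun h => hW (Submodule.finrank_eq_zero.mp h)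
        omega
      · have hrk : Module.finrank F (Fin (Module.finrank F L) → ↥(Submodule.span F {v}))
            = Module.finrank F L := by
          rw [Module.finrank_pi_fintype, hdim]
          simp
        refine ⟨LinearEquiv.ofFinrankEq _ _ hrk, ?_⟩
        intro f g
        rw [hnz]
        have h0 : (fun i => (⟨mul (f i) (g i), by rw [hnz]; exact Submodule.zero_mem _⟩ :
            ↥(Submodule.span F {v})))
            = (0 : Fin (Module.finrank F L) → ↥(Submodule.span F {v})) := by
          funext i
          apply Subtype.ext
          simp [hnz]
        exact (map_zero (LinearEquiv.ofFinrankEq _ _ hrk)).symm.trans (congrArg _ h0.symm)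
      · rintro ⟨x, y, hxy⟩
        exact absurd (hnz x y) hxy
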